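/- If f : O → ℝ has finite Beer variation V_Beer(f) < +∞, then there exists a countable subset Z of O such that f is continuous at every point of O \ Z. -/

import Mathlib

open MeasureTheory Set Filter Topology
open scoped ENNReal NNReal

noncomputable section

namespace NAKoksma

variable (K : Type*) [NontriviallyNormedField K] [IsUltrametricDist K]

/-- The ring of integers `O = {x : K | ‖x‖ ≤ 1}` of a non-Archimedean normed field. -/
def RoI : Subring K where
  carrier := {x : K | ‖x‖ ≤ 1}
  mul_mem' := fun {a b} ha hb => by
    simp only [Set.mem_setOf_eq] at *
    calc ‖a * b‖ = ‖a‖ * ‖b‖ := norm_mul a b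
      _ ≤ 1 * 1 := mul_le_mul ha hb (norm_nonneg b) zero_le_one
      _ = 1 := one_mul 1
  one_mem' := by simp
  add_mem' := fun {a b} ha hb => by
    simp only [Set.mem_setOf_eq] at *
    exact (IsUltrametricDist.norm_add_le_max a b).trans (max_le ha hb)
  zero_mem' := by simp
  neg_mem' := fun {a} ha => by
    simp only [Set.mem_setOf_eq, norm_neg] at *
    exact ha

variable (q : ℕ)

/-- The disc of radius `q ^ (-n)` centered at `a` in the ring of integers. -/
def disc (a : RoI K) (n : ℕ) : Set (RoI K) :=
  {x : RoI K | ‖(x : K) - (a : K)‖ ≤ (q : ℝ) ^ (-(n : ℤ))}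

/-- A subset of `O` is a disc if it is of the form `D_r(a)` with `r = q^(-n)`, `0 < r ≤ 1`. -/
def IsDisc (D : Set (RoI K)) : Prop := ∃ (a : RoI K) (n : ℕ), D = disc K q a n

/-- A Taibleson partition: a finite collection of discs partitioning `O`. -/
def IsTaibPartition (P : Finset (Set (RoI K))) : Prop :=
  (∀ D ∈ P, IsDisc K q D) ∧ (P : Set (Set (RoI K))).PairwiseDisjoint id ∧
    ⋃₀ (P : Set (Set (RoI K))) = Set.univ

/-- `V_Π(f) = Σ_{D ∈ Π} sup_{x,y ∈ D} (f x - f y)`, valued in `[0,∞]`. -/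
def VPi (f : RoI K → ℝ) (P : Finset (Set (RoI K))) : ℝ≥0∞ :=
  ∑ D ∈ P, ⨆ x ∈ D, ⨆ y ∈ D, ENNReal.ofReal (f x - f y)

/-- The Taibleson variation `V_Taib(f) = sup_Π V_Π(f)`. -/
def VTaib (f : RoI K → ℝ) : ℝ≥0∞ :=
  ⨆ P : {P : Finset (Set (RoI K)) // IsTaibPartition K q P}, VPi K f P.1

variable [MeasurableSpace K]

/-- The discrepancy `Δ(X) = sup_D | |X ∩ D| / |X| - μ(D) |` of a finite set `X ⊆ O`. -/
def discrepancy (μ : Measure (RoI K)) (X : Finset (RoI K)) : ℝ :=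
  ⨆ D : {D : Set (RoI K) // IsDisc K q D},
    |(Nat.card ↥((X : Set (RoI K)) ∩ D.1) : ℝ) / (X.card : ℝ) - (μ D.1).toReal|

variable (π : RoI K)

/-- The `i`-th point `m_i = a_0 + a_1 π + ⋯ + a_{λ-1} π^{λ-1}` in the dictionary
ordering of the coefficient strings `(a_0, …, a_{λ-1})` with respect to the
indexing of the coset representatives `S`. -/
def beerPoint (S : ℕ → RoI K) (lam i : ℕ) : RoI K :=
  ∑ j ∈ Finset.range lam, S (i / q ^ (lam - 1 - j) % q) * π ^ j

/-- `V_λ(f) = sup_{x_i ∈ E_i} Σ_{i=1}^{q^λ - 1} |f(x_i) - f(x_{i-1})|` over the ordered Beer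
partition `E_0, …, E_{q^λ - 1}` of level `λ`. -/
def VBeerLevel (S : ℕ → RoI K) (f : RoI K → ℝ) (lam : ℕ) : ℝ≥0∞ :=
  ⨆ x : {x : ℕ → RoI K // ∀ i < q ^ lam, x i ∈ disc K q (beerPoint K q π S lam i) lam},
    ∑ i ∈ Finset.Ico 1 (q ^ lam), ENNReal.ofReal |f (x.1 i) - f (x.1 (i - 1))|

/-- The Beer variation `V_Beer(f) = lim_{λ→∞} V_λ(f) = sup_{λ ≥ 1} V_λ(f)`. -/
def VBeer (S : ℕ → RoI K) (f : RoI K → ℝ) : ℝ≥0∞ :=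
  ⨆ lam : ℕ, VBeerLevel K q π S f (lam + 1)

/-- `S : ℕ → O` (through indices `0, …, q-1`) is a complete ordered system of coset
representatives for the residue field `O/πO`, containing `0`. -/
def IsRepSystem (S : ℕ → RoI K) : Prop :=
  (∃ i, i < q ∧ S i = 0) ∧
    Function.Bijective fun i : Fin q => Ideal.Quotient.mk (Ideal.span {π}) (S (i : ℕ))

/-- The Berkovich-analytic variation
`V_Berk(f) = Σ_D Σ_{D' ≺ D} |f(D') - f(D)|`, where `D' ≺ D` means `D' ⊆ D` and
`μ(D') = μ(D)/q`, and `f(D)` denotes the average of `f` over `D`. -/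
def VBerk (μ : Measure (RoI K)) (f : RoI K → ℝ) : ℝ≥0∞ :=
  ∑' D : {D : Set (RoI K) // IsDisc K q D},
    ∑' D' : {D' : Set (RoI K) // IsDisc K q D' ∧ D' ⊆ D.1 ∧ μ D' = μ D.1 / (q : ℝ≥0∞)},
      ENNReal.ofReal |(⨍ x in D'.1, f x ∂μ) - ⨍ x in D.1, f x ∂μ|

/-- The level `ℓ(γ)` of a character `γ : O → 𝕋`: the least `ℓ ≥ 0` such that `γ` is trivial
on `π^ℓ O`. -/
def charLevel (γ : AddChar (RoI K) Circle) : ℕ :=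
  sInf {l : ℕ | ∀ y : RoI K, γ (π ^ l * y) = 1}

/-- The Fourier coefficient `f̂(γ) = ∫_O f(x) conj(γ(x)) dμ(x)`. -/
def fourierCoeff (μ : Measure (RoI K)) (f : RoI K → ℂ) (γ : AddChar (RoI K) Circle) : ℂ :=
  ∫ x, f x * (starRingEnd ℂ) ((γ x : Circle) : ℂ) ∂μ

/-- The Fourier-analytic variation `V_Fourier(f) = Σ_{γ ≠ γ₀} q^{ℓ(γ)} |f̂(γ)|`, the sum over
all nontrivial continuous characters of `O`. -/
def VFourier (μ : Measure (RoI K)) (f : RoI K → ℝ) : ℝ≥0∞ :=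
  ∑' γ : {γ : AddChar (RoI K) Circle // Continuous ⇑γ ∧ γ ≠ 1},
    ENNReal.ofReal ((q : ℝ) ^ charLevel K π γ.1 * ‖fourierCoeff K μ (fun x => (f x : ℂ)) γ.1‖)

/-- A function is a finite linear combination of characteristic functions of discs. -/
def IsDiscSimple (g : RoI K → ℝ) : Prop :=
  ∃ (P : Finset (Set (RoI K))) (c : Set (RoI K) → ℝ),
    (∀ D ∈ P, IsDisc K q D) ∧ g = fun x => ∑ D ∈ P, c D * D.indicator 1 x

/-- Integrability in the sense of Beer: `f` can be squeezed between finite linear combinations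
of characteristic functions of discs with integrals converging to each other. -/
def BeerIntegrable [MeasurableSpace K] (μ : Measure (RoI K)) (f : RoI K → ℝ) : Prop :=
  ∃ u v : ℕ → RoI K → ℝ,
    (∀ n, IsDiscSimple K q (u n)) ∧ (∀ n, IsDiscSimple K q (v n)) ∧
    (∀ n x, u n x ≤ f x ∧ f x ≤ v n x) ∧
    Tendsto (fun n => ∫ x, (v n x - u n x) ∂μ) atTop (𝓝 0)

variable [LocallyCompactSpace K] [BorelSpace K]


/-! ### Auxiliary machinery for the proof -/

section BeerVariationAux

/-- `(q : ℝ) ^ (-l)` tends to `0`. -/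
lemma rtend (hq : 1 < q) :
    Filter.Tendsto (fun l : ℕ => (q : ℝ) ^ (-(l : ℤ))) Filter.atTop (𝓝 0) := by
  simp only [zpow_neg, zpow_natCast, ← inv_pow]
  exact tendsto_pow_atTop_nhds_zero_of_lt_one (by positivity)
    (by rw [inv_lt_one_iff₀]; right; exact_mod_cast hq)

lemma rq_succ (hq : 1 < q) (l : ℕ) :
    (q : ℝ) ^ (-((l + 1 : ℕ) : ℤ)) = (q : ℝ)⁻¹ * (q : ℝ) ^ (-(l : ℤ)) := by
  have h0 : (0 : ℝ) < (q : ℝ) := by exact_mod_cast Nat.zero_lt_of_lt hq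
  rw [show (-((l + 1 : ℕ) : ℤ)) = -1 + -(l : ℤ) by push_cast; ring,
    zpow_add₀ (ne_of_gt h0), zpow_neg_one]

/-- Telescoping estimate. -/
lemma tel_sum (g : ℕ → ℝ) (a b : ℕ) (hab : a ≤ b) :
    ENNReal.ofReal |g b - g a| ≤ ∑ i ∈ Finset.Ioc a b, ENNReal.ofReal |g i - g (i - 1)| := by
  induction b, hab using Nat.le_induction with
  | base => simp
  | succ b hab ih =>
    rw [Finset.sum_Ioc_succ_top (by omega), Nat.add_sub_cancel]
    refine le_trans ?_ (add_le_add ih le_rfl)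
    calc ENNReal.ofReal |g (b + 1) - g a|
        ≤ ENNReal.ofReal (|g b - g a| + |g (b + 1) - g b|) := by
          apply ENNReal.ofReal_le_ofReal
          have := abs_sub_le (g (b + 1)) (g b) (g a)
          have h2 : |g (b + 1) - g b| + |g b - g a| = |g b - g a| + |g (b + 1) - g b| := by ring
          linarith
      _ ≤ _ := ENNReal.ofReal_add_le

/-- Division by `π` of elements of small norm. -/
lemma dvd_of_norm_le (hq : 1 < q) (hπq : ‖(π : K)‖ = (q : ℝ)⁻¹) {z : RoI K}
    (h : ‖(z : K)‖ ≤ (q : ℝ)⁻¹) : ∃ w : RoI K, z = π * w := by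
  have hq0 : (0 : ℝ) < (q : ℝ) := by exact_mod_cast Nat.zero_lt_of_lt hq
  have hq0' : (0 : ℝ) < (q : ℝ)⁻¹ := inv_pos.2 hq0
  have hπ0 : (π : K) ≠ 0 := by
    intro h0; rw [h0, norm_zero] at hπq; linarith
  refine ⟨⟨(z : K) / (π : K), ?_⟩, ?_⟩
  · show ‖(z : K) / (π : K)‖ ≤ 1
    rw [norm_div, hπq, div_le_one hq0']
    exact h
  · apply Subtype.ext
    push_cast
    show (z : K) = (π : K) * ((z : K) / (π : K))
    field_simp

variable {S : ℕ → RoI K}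

lemma exists_rep
    (hb : Function.Bijective fun i : Fin q =>
      Ideal.Quotient.mk (Ideal.span {π} : Ideal (RoI K)) (S (i : ℕ)))
    (z : RoI K) : ∃ p : Fin q × RoI K, z = S (p.1 : ℕ) + π * p.2 := by
  obtain ⟨i, hi⟩ := hb.surjective (Ideal.Quotient.mk _ z)
  obtain ⟨c, hc⟩ := Ideal.mem_span_singleton.1 (Ideal.Quotient.eq.1 hi)
  exact ⟨(i, -c), by rw [mul_neg, ← hc]; ring⟩

/-- The leading digit of `z` with respect to the representative system. -/
noncomputable def digitF
    (hb : Function.Bijective fun i : Fin q =>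
      Ideal.Quotient.mk (Ideal.span {π} : Ideal (RoI K)) (S (i : ℕ)))
    (z : RoI K) : Fin q := (exists_rep K q π hb z).choose.1

/-- The shift `(z - S (digit z)) / π`. -/
noncomputable def shf
    (hb : Function.Bijective fun i : Fin q =>
      Ideal.Quotient.mk (Ideal.span {π} : Ideal (RoI K)) (S (i : ℕ)))
    (z : RoI K) : RoI K := (exists_rep K q π hb z).choose.2

lemma digit_spec
    (hb : Function.Bijective fun i : Fin q =>
      Ideal.Quotient.mk (Ideal.span {π} : Ideal (RoI K)) (S (i : ℕ)))
    (z : RoI K) : z = S ((digitF K q π hb z : ℕ)) + π * shf K q π hb z :=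
  (exists_rep K q π hb z).choose_spec

lemma mk_digit
    (hb : Function.Bijective fun i : Fin q =>
      Ideal.Quotient.mk (Ideal.span {π} : Ideal (RoI K)) (S (i : ℕ)))
    (z : RoI K) :
    Ideal.Quotient.mk (Ideal.span {π} : Ideal (RoI K)) (S ((digitF K q π hb z : ℕ)))
      = Ideal.Quotient.mk (Ideal.span {π} : Ideal (RoI K)) z := by
  rw [Ideal.Quotient.eq, Ideal.mem_span_singleton]
  exact ⟨-(shf K q π hb z), by linear_combination -(digit_spec K q π hb z)⟩

/-- The index of the level-`l` Beer disc containing `z`. -/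
noncomputable def idx
    (hb : Function.Bijective fun i : Fin q =>
      Ideal.Quotient.mk (Ideal.span {π} : Ideal (RoI K)) (S (i : ℕ))) :
    ℕ → RoI K → ℕ
  | 0, _ => 0
  | (l + 1), z => (digitF K q π hb z : ℕ) * q ^ l + idx hb l (shf K q π hb z)

lemma beerPoint_succ (S : ℕ → RoI K) (hq0 : 0 < q) {i' l : ℕ} (hi' : i' < q ^ l)
    {a : ℕ} (ha : a < q) :
    beerPoint K q π S (l + 1) (a * q ^ l + i') = S a + π * beerPoint K q π S l i' := by
  simp only [beerPoint]
  rw [Finset.sum_range_succ', Finset.mul_sum]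
  have h0 : (a * q ^ l + i') / q ^ (l + 1 - 1 - 0) % q = a := by
    rw [show l + 1 - 1 - 0 = l by omega, mul_comm, Nat.mul_add_div (pow_pos hq0 l),
      Nat.div_eq_of_lt hi', add_zero, Nat.mod_eq_of_lt ha]
  rw [h0, pow_zero, mul_one, add_comm]
  congr 1
  apply Finset.sum_congr rfl
  intro j hj
  rw [Finset.mem_range] at hj
  have hkey : (a * q ^ l + i') / q ^ (l - 1 - j) % q = i' / q ^ (l - 1 - j) % q := by
    rw [show q ^ l = q ^ (l - 1 - j) * q ^ (j + 1) by rw [← pow_add]; congr 1; omega,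
      show a * (q ^ (l - 1 - j) * q ^ (j + 1)) + i' = q ^ (l - 1 - j) * (a * q ^ (j + 1)) + i' by
        ring,
      Nat.mul_add_div (pow_pos hq0 _), pow_succ, ← mul_assoc, add_comm,
      Nat.add_mul_mod_self_right]
  rw [show l + 1 - 1 - (j + 1) = l - 1 - j by omega, hkey, pow_succ]
  ring

lemma idx_lt_and_norm (hq : 1 < q) (hπq : ‖(π : K)‖ = (q : ℝ)⁻¹)
    (hb : Function.Bijective fun i : Fin q =>
      Ideal.Quotient.mk (Ideal.span {π} : Ideal (RoI K)) (S (i : ℕ))) :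
    ∀ (l : ℕ) (z : RoI K), idx K q π hb l z < q ^ l ∧
      ‖(z : K) - (beerPoint K q π S l (idx K q π hb l z) : K)‖ ≤ (q : ℝ) ^ (-(l : ℤ)) := by
  intro l
  induction l with
  | zero =>
    intro z
    refine ⟨by simp [idx], ?_⟩
    simp only [idx, beerPoint, Finset.range_zero, Finset.sum_empty, ZeroMemClass.coe_zero,
      sub_zero, Nat.cast_zero, neg_zero, zpow_zero]
    exact z.2
  | succ l ih =>
    intro z
    obtain ⟨hlt, hnorm⟩ := ih (shf K q π hb z)
    have hq0 : 0 < q := by omega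
    have hidx : idx K q π hb (l + 1) z
        = (digitF K q π hb z : ℕ) * q ^ l + idx K q π hb l (shf K q π hb z) := rfl
    have hbp : beerPoint K q π S (l + 1)
          ((digitF K q π hb z : ℕ) * q ^ l + idx K q π hb l (shf K q π hb z))
        = S ((digitF K q π hb z : ℕ))
          + π * beerPoint K q π S l (idx K q π hb l (shf K q π hb z)) :=
      beerPoint_succ K q π S hq0 hlt (digitF K q π hb z).isLt
    constructor
    · rw [hidx]
      calc (digitF K q π hb z : ℕ) * q ^ l + idx K q π hb l (shf K q π hb z)
          < (digitF K q π hb z : ℕ) * q ^ l + q ^ l := Nat.add_lt_add_left hlt _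
        _ = ((digitF K q π hb z : ℕ) + 1) * q ^ l := by ring
        _ ≤ q * q ^ l := mul_le_mul_left (Nat.succ_le_of_lt (digitF K q π hb z).isLt) _
        _ = q ^ (l + 1) := by rw [pow_succ, mul_comm]
    · rw [hidx, hbp]
      have hz := digit_spec K q π hb z
      have hzc : (z : K) = (S ((digitF K q π hb z : ℕ)) : K) + (π : K) * (shf K q π hb z : K) := by
        exact_mod_cast congrArg (fun t : RoI K => (t : K)) hz
      have hco : (z : K) - ((S ((digitF K q π hb z : ℕ))
            + π * beerPoint K q π S l (idx K q π hb l (shf K q π hb z)) : RoI K) : K)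
          = (π : K) * ((shf K q π hb z : K)
            - (beerPoint K q π S l (idx K q π hb l (shf K q π hb z)) : K)) := by
        push_cast
        rw [hzc]; ring
      rw [hco, norm_mul, hπq, rq_succ q hq l]
      exact mul_le_mul_of_nonneg_left hnorm (by positivity)

lemma idx_div (hq : 1 < q)
    (hb : Function.Bijective fun i : Fin q =>
      Ideal.Quotient.mk (Ideal.span {π} : Ideal (RoI K)) (S (i : ℕ)))
    (hπq : ‖(π : K)‖ = (q : ℝ)⁻¹) :
    ∀ (L m : ℕ) (z : RoI K), m ≤ L → idx K q π hb L z / q ^ (L - m) = idx K q π hb m z := by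
  intro L
  induction L with
  | zero =>
    intro m z hm
    obtain rfl : m = 0 := by omega
    simp [idx]
  | succ L ih =>
    intro m z hm
    match m with
    | 0 =>
      simp only [Nat.sub_zero]
      rw [Nat.div_eq_of_lt (idx_lt_and_norm K q π hq hπq hb (L + 1) z).1]
      rfl
    | (μ + 1) =>
      have hμ : μ ≤ L := by omega
      show ((digitF K q π hb z : ℕ) * q ^ L + idx K q π hb L (shf K q π hb z))
          / q ^ (L + 1 - (μ + 1)) = _
      rw [show L + 1 - (μ + 1) = L - μ by omega,
        show q ^ L = q ^ (L - μ) * q ^ μ by rw [← pow_add]; congr 1; omega,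
        show (digitF K q π hb z : ℕ) * (q ^ (L - μ) * q ^ μ)
            = q ^ (L - μ) * ((digitF K q π hb z : ℕ) * q ^ μ) by ring,
        Nat.mul_add_div (pow_pos (by omega) _), ih μ _ hμ]
      rfl

lemma idx_eq_of_norm_le (hq : 1 < q) (hπq : ‖(π : K)‖ = (q : ℝ)⁻¹)
    (hb : Function.Bijective fun i : Fin q =>
      Ideal.Quotient.mk (Ideal.span {π} : Ideal (RoI K)) (S (i : ℕ))) :
    ∀ (l : ℕ) (x y : RoI K), ‖(x : K) - (y : K)‖ ≤ (q : ℝ) ^ (-(l : ℤ)) →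
      idx K q π hb l x = idx K q π hb l y := by
  intro l
  induction l with
  | zero => intro x y _; rfl
  | succ l ih =>
    intro x y h
    have hq0 : (0 : ℝ) < (q : ℝ) := by exact_mod_cast Nat.zero_lt_of_lt hq
    have hle1 : ‖(x : K) - (y : K)‖ ≤ (q : ℝ)⁻¹ := by
      refine h.trans ?_
      rw [rq_succ q hq l]
      have h1 : (q : ℝ) ^ (-(l : ℤ)) ≤ 1 :=
        zpow_le_one_of_nonpos₀ (by exact_mod_cast hq.le) (by omega)
      exact mul_le_of_le_one_right (by positivity) h1
    obtain ⟨v, hv⟩ := dvd_of_norm_le K q π hq hπq (z := x - y)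
      (by
        have hc : ((x - y : RoI K) : K) = (x : K) - (y : K) := by push_cast; ring
        rw [hc]; exact hle1)
    have hxy : Ideal.Quotient.mk (Ideal.span {π} : Ideal (RoI K)) x
        = Ideal.Quotient.mk (Ideal.span {π} : Ideal (RoI K)) y :=
      Ideal.Quotient.eq.2 (Ideal.mem_span_singleton.2 ⟨v, hv⟩)
    have hdig : digitF K q π hb x = digitF K q π hb y :=
      hb.injective (((mk_digit K q π hb x).trans hxy).trans (mk_digit K q π hb y).symm)
    have hw : π * (shf K q π hb x - shf K q π hb y) = x - y := by
      have hx := digit_spec K q π hb x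
      have hy := digit_spec K q π hb y
      rw [hdig] at hx
      linear_combination hy - hx
    have hco : (π : K) * ((shf K q π hb x : K) - (shf K q π hb y : K)) = (x : K) - (y : K) := by
      exact_mod_cast congrArg (fun t : RoI K => (t : K)) hw
    have h2 : ‖(shf K q π hb x : K) - (shf K q π hb y : K)‖ ≤ (q : ℝ) ^ (-(l : ℤ)) := by
      have h3 := h
      rw [← hco, norm_mul, hπq, rq_succ q hq l] at h3
      exact le_of_mul_le_mul_left h3 (inv_pos.2 hq0)
    show (digitF K q π hb x : ℕ) * q ^ l + idx K q π hb l (shf K q π hb x)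
        = (digitF K q π hb y : ℕ) * q ^ l + idx K q π hb l (shf K q π hb y)
    rw [hdig, ih _ _ h2]

lemma norm_le_of_idx_eq (hq : 1 < q) (hπq : ‖(π : K)‖ = (q : ℝ)⁻¹)
    (hb : Function.Bijective fun i : Fin q =>
      Ideal.Quotient.mk (Ideal.span {π} : Ideal (RoI K)) (S (i : ℕ)))
    (l : ℕ) (x y : RoI K) (h : idx K q π hb l x = idx K q π hb l y) :
    ‖(x : K) - (y : K)‖ ≤ (q : ℝ) ^ (-(l : ℤ)) := by
  have h1 := (idx_lt_and_norm K q π hq hπq hb l x).2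
  have h2 := (idx_lt_and_norm K q π hq hπq hb l y).2
  rw [h] at h1
  set B := (beerPoint K q π S l (idx K q π hb l y) : K) with hB
  have h3 : ‖(x : K) - (y : K)‖ ≤ max ‖(x : K) - B‖ ‖B - (y : K)‖ := by
    have := IsUltrametricDist.norm_add_le_max ((x : K) - B) (B - (y : K))
    rwa [sub_add_sub_cancel] at this
  refine h3.trans (max_le h1 ?_)
  rw [show ‖B - (y : K)‖ = ‖(y : K) - B‖ from norm_sub_rev _ _]
  exact h2

/-- Auxiliary choice function for the variation estimate. -/
noncomputable def chooseFn (F : Finset (RoI K)) (y : RoI K → RoI K) (g : RoI K → ℕ)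
    (dflt : ℕ → RoI K) (i : ℕ) : RoI K :=
  if h : ∃ x, x ∈ F ∧ g x = i then h.choose
  else if h' : ∃ x, x ∈ F ∧ g (y x) = i then y h'.choose
  else dflt i

/-- The core estimate: finitely many well-separated oscillation pairs are dominated by the
level-`L` Beer variation. -/
lemma core (hq : 1 < q) (hπq : ‖(π : K)‖ = (q : ℝ)⁻¹)
    (hb : Function.Bijective fun i : Fin q =>
      Ideal.Quotient.mk (Ideal.span {π} : Ideal (RoI K)) (S (i : ℕ)))
    (f : RoI K → ℝ) (F : Finset (RoI K)) (y : RoI K → RoI K) (l L : ℕ) (hlL : l ≤ L)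
    (hsep : ∀ x ∈ F, ∀ x' ∈ F, x ≠ x' → (q : ℝ) ^ (-(l : ℤ)) < ‖(x : K) - (x' : K)‖)
    (hclose : ∀ x ∈ F, ‖((y x : K)) - (x : K)‖ ≤ (q : ℝ) ^ (-(l : ℤ)))
    (hfar : ∀ x ∈ F, (q : ℝ) ^ (-(L : ℤ)) < ‖((y x : K)) - (x : K)‖) :
    ∑ x ∈ F, ENNReal.ofReal |f (y x) - f x| ≤ VBeerLevel K q π S f L := by
  classical
  have hrmono : (q : ℝ) ^ (-(L : ℤ)) ≤ (q : ℝ) ^ (-(l : ℤ)) :=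
    zpow_le_zpow_right₀ (by exact_mod_cast hq.le) (by omega)
  set g : RoI K → ℕ := fun z => idx K q π hb L z with hg
  have hnorm : ∀ a b : RoI K, g a = g b → ‖(a : K) - (b : K)‖ ≤ (q : ℝ) ^ (-(L : ℤ)) :=
    fun a b h => norm_le_of_idx_eq K q π hq hπq hb L a b h
  have same : ∀ x ∈ F, ∀ x' ∈ F, ‖(x : K) - (x' : K)‖ ≤ (q : ℝ) ^ (-(l : ℤ)) → x = x' := by
    intro x hx x' hx' h
    by_contra hne
    exact absurd h (not_le.2 (hsep x hx x' hx' hne))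
  have tri : ∀ a b c : K, ‖a - c‖ ≤ max ‖a - b‖ ‖b - c‖ := by
    intro a b c
    have := IsUltrametricDist.norm_add_le_max (a - b) (b - c)
    rwa [sub_add_sub_cancel] at this
  have hcloseyx : ∀ x ∈ F, ∀ x' ∈ F, ‖((y x : K)) - (x' : K)‖ ≤ (q : ℝ) ^ (-(l : ℤ)) → x = x' := by
    intro x hx x' hx' h
    refine same x hx x' hx' ?_
    refine (tri _ ((y x : K)) _).trans (max_le ?_ h)
    rw [norm_sub_rev]
    exact hclose x hx
  have hgyne : ∀ x ∈ F, g (y x) ≠ g x := by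
    intro x hx h
    exact absurd (hnorm _ _ h) (not_le.2 (hfar x hx))
  set ch := chooseFn K F y g (fun i => beerPoint K q π S L i) with hch
  have hch1 : ∀ x ∈ F, ch (g x) = x := by
    intro x hx
    have hex : ∃ x', x' ∈ F ∧ g x' = g x := ⟨x, hx, rfl⟩
    rw [hch]
    simp only [chooseFn]
    rw [dif_pos hex]
    obtain ⟨hm, he⟩ := hex.choose_spec
    exact same _ hm _ hx ((hnorm _ _ he).trans hrmono)
  have hch2 : ∀ x ∈ F, ch (g (y x)) = y x := by
    intro x hx
    have hnex : ¬ ∃ x', x' ∈ F ∧ g x' = g (y x) := by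
      rintro ⟨x', hm, he⟩
      have hxx : x' = x := by
        refine (hcloseyx x hx x' hm ?_).symm
        rw [norm_sub_rev]
        exact (hnorm _ _ he).trans hrmono
      apply hgyne x hx
      rw [hxx] at he
      exact he.symm
    have hex' : ∃ x', x' ∈ F ∧ g (y x') = g (y x) := ⟨x, hx, rfl⟩
    rw [hch]
    simp only [chooseFn]
    rw [dif_neg hnex, dif_pos hex']
    obtain ⟨hm, he⟩ := hex'.choose_spec
    have hxe : hex'.choose = x := by
      apply same _ hm _ hx
      refine (tri _ ((y hex'.choose : K)) _).trans (max_le ?_ ?_)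
      · rw [norm_sub_rev]
        exact hclose _ hm
      · exact (tri _ ((y x : K)) _).trans
          (max_le ((hnorm _ _ he).trans hrmono) (hclose x hx))
    rw [hxe]
  have hchmem : ∀ i < q ^ L, ch i ∈ disc K q (beerPoint K q π S L i) L := by
    intro i hi
    rw [hch]
    simp only [chooseFn]
    split_ifs with h1 h2
    · obtain ⟨hm, he⟩ := h1.choose_spec
      have hn := (idx_lt_and_norm K q π hq hπq hb L h1.choose).2
      simp only [hg] at he
      rw [he] at hn
      exact hn
    · obtain ⟨hm, he⟩ := h2.choose_spec
      have hn := (idx_lt_and_norm K q π hq hπq hb L (y h2.choose)).2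
      simp only [hg] at he
      rw [he] at hn
      exact hn
    · show ‖(beerPoint K q π S L i : K) - (beerPoint K q π S L i : K)‖ ≤ (q : ℝ) ^ (-(L : ℤ))
      rw [sub_self, norm_zero]
      positivity
  set ix : RoI K → ℕ := fun x => min (g x) (g (y x)) with hix
  set jx : RoI K → ℕ := fun x => max (g x) (g (y x)) with hjx
  have hij : ∀ x ∈ F, ix x < jx x := fun x hx => min_lt_max.2 (Ne.symm (hgyne x hx))
  have hterm : ∀ x ∈ F, ENNReal.ofReal |f (y x) - f x|
      ≤ ∑ i ∈ Finset.Ioc (ix x) (jx x), ENNReal.ofReal |f (ch i) - f (ch (i - 1))| := by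
    intro x hx
    have htel := tel_sum (fun i => f (ch i)) (ix x) (jx x) (le_of_lt (hij x hx))
    refine le_trans ?_ htel
    rcases le_or_gt (g x) (g (y x)) with hle | hlt
    · have h1 : ix x = g x := min_eq_left hle
      have h2 : jx x = g (y x) := max_eq_right hle
      have e2 : ENNReal.ofReal |f (y x) - f x|
          = ENNReal.ofReal |f (ch (jx x)) - f (ch (ix x))| := by
        rw [h1, h2, hch1 x hx, hch2 x hx]
      rw [e2]
    · have h1 : ix x = g (y x) := min_eq_right hlt.le
      have h2 : jx x = g x := max_eq_left hlt.le
      have e2 : ENNReal.ofReal |f (y x) - f x|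
          = ENNReal.ofReal |f (ch (jx x)) - f (ch (ix x))| := by
        rw [h1, h2, hch1 x hx, hch2 x hx, abs_sub_comm]
      rw [e2]
  have hdivx : ∀ x ∈ F, g x / q ^ (L - l) = idx K q π hb l x :=
    fun x _ => idx_div K q π hq hb hπq L l x hlL
  have hdivy : ∀ x ∈ F, g (y x) / q ^ (L - l) = idx K q π hb l x := by
    intro x hx
    rw [hg]
    simp only
    rw [idx_div K q π hq hb hπq L l (y x) hlL]
    exact idx_eq_of_norm_le K q π hq hπq hb l (y x) x (hclose x hx)
  have hm_block : ∀ x ∈ F, ∀ m ∈ Finset.Ioc (ix x) (jx x),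
      m / q ^ (L - l) = idx K q π hb l x := by
    intro x hx m hm
    rw [Finset.mem_Ioc] at hm
    have hi : ix x / q ^ (L - l) = idx K q π hb l x := by
      rcases min_choice (g x) (g (y x)) with h | h
      · rw [hix]; simp only; rw [h]; exact hdivx x hx
      · rw [hix]; simp only; rw [h]; exact hdivy x hx
    have hj : jx x / q ^ (L - l) = idx K q π hb l x := by
      rcases max_choice (g x) (g (y x)) with h | h
      · rw [hjx]; simp only; rw [h]; exact hdivx x hx
      · rw [hjx]; simp only; rw [h]; exact hdivy x hx
    have hlo : idx K q π hb l x ≤ m / q ^ (L - l) := by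
      rw [← hi]; exact Nat.div_le_div_right hm.1.le
    have hhi : m / q ^ (L - l) ≤ idx K q π hb l x := by
      rw [← hj]; exact Nat.div_le_div_right hm.2
    omega
  have hdisj : (↑F : Set (RoI K)).PairwiseDisjoint
      (fun x => Finset.Ioc (ix x) (jx x)) := by
    intro x hx x' hx' hne
    refine Finset.disjoint_left.2 ?_
    intro m hmx hmx'
    have h1 := hm_block x (Finset.mem_coe.1 hx) m hmx
    have h2 := hm_block x' (Finset.mem_coe.1 hx') m hmx'
    have heq : idx K q π hb l x = idx K q π hb l x' := by rw [← h1, ← h2]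
    exact hne (same x (Finset.mem_coe.1 hx) x' (Finset.mem_coe.1 hx')
      (norm_le_of_idx_eq K q π hq hπq hb l x x' heq))
  have hsub : F.biUnion (fun x => Finset.Ioc (ix x) (jx x)) ⊆ Finset.Ico 1 (q ^ L) := by
    intro m hm
    rw [Finset.mem_biUnion] at hm
    obtain ⟨x, hx, hmx⟩ := hm
    rw [Finset.mem_Ioc] at hmx
    rw [Finset.mem_Ico]
    have hjlt : jx x < q ^ L := by
      rw [hjx]
      simp only
      exact max_lt (idx_lt_and_norm K q π hq hπq hb L x).1
        (idx_lt_and_norm K q π hq hπq hb L (y x)).1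
    omega
  calc ∑ x ∈ F, ENNReal.ofReal |f (y x) - f x|
      ≤ ∑ x ∈ F, ∑ i ∈ Finset.Ioc (ix x) (jx x),
          ENNReal.ofReal |f (ch i) - f (ch (i - 1))| := Finset.sum_le_sum hterm
    _ = ∑ i ∈ F.biUnion (fun x => Finset.Ioc (ix x) (jx x)),
          ENNReal.ofReal |f (ch i) - f (ch (i - 1))| := (Finset.sum_biUnion hdisj).symm
    _ ≤ ∑ i ∈ Finset.Ico 1 (q ^ L), ENNReal.ofReal |f (ch i) - f (ch (i - 1))| :=
        Finset.sum_le_sum_of_subset hsub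
    _ ≤ VBeerLevel K q π S f L := by
        rw [VBeerLevel]
        exact le_iSup (fun x : {x : ℕ → RoI K //
          ∀ i < q ^ L, x i ∈ disc K q (beerPoint K q π S L i) L} =>
          ∑ i ∈ Finset.Ico 1 (q ^ L), ENNReal.ofReal |f (x.1 i) - f (x.1 (i - 1))|)
          ⟨ch, hchmem⟩

end BeerVariationAux

theorem beer_finite_variation_continuous_off_countable
    (hq : 1 < q)
    (hπ : ‖(π : K)‖ = (q : ℝ)⁻¹)
    (hunif : ∀ x : RoI K, ‖(x : K)‖ < 1 → ‖(x : K)‖ ≤ ‖(π : K)‖)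
    (hres : Nat.card (↥(RoI K) ⧸ (Ideal.span {π} : Ideal ↥(RoI K))) = q)
    (S : ℕ → RoI K) (hS : IsRepSystem K q π S)
    (f : RoI K → ℝ) (hf : VBeer K q π S f < ⊤) :
    ∃ Z : Set (RoI K), Z.Countable ∧ ∀ x : RoI K, x ∉ Z → ContinuousAt f x := by
  classical
  obtain ⟨-, hb⟩ := hS
  have hq0 : (0 : ℝ) < (q : ℝ) := by exact_mod_cast Nat.zero_lt_of_lt hq
  set Zn : ℕ → Set (RoI K) := fun n =>
    {x | ∀ δ : ℝ, 0 < δ → ∃ z : RoI K, dist z x < δ ∧ 1 / ((n : ℝ) + 1) ≤ |f z - f x|} with hZn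
  have hfin : ∀ n, (Zn n).Finite := by
    intro n
    by_contra hinf
    have hinf' : (Zn n).Infinite := hinf
    set e : ℝ≥0∞ := ENNReal.ofReal (1 / ((n : ℝ) + 1)) with he
    have he0 : 0 < e := ENNReal.ofReal_pos.2 (by positivity)
    set N : ℕ := ⌈(VBeer K q π S f / e).toReal⌉₊ with hN
    obtain ⟨F, hFsub, hFcard⟩ := hinf'.exists_subset_card_eq (N + 1)
    have hl : ∃ l : ℕ, ∀ x ∈ F, ∀ x' ∈ F, x ≠ x' →
        (q : ℝ) ^ (-(l : ℤ)) < ‖(x : K) - (x' : K)‖ := by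
      have hev : ∀ᶠ l : ℕ in atTop, ∀ x ∈ F, ∀ x' ∈ F, x ≠ x' →
          (q : ℝ) ^ (-(l : ℤ)) < ‖(x : K) - (x' : K)‖ := by
        rw [Filter.eventually_all_finset]
        intro x hx
        rw [Filter.eventually_all_finset]
        intro x' hx'
        by_cases hxx : x = x'
        · exact Filter.Eventually.of_forall (fun _ h => absurd hxx h)
        · have hpos : 0 < ‖(x : K) - (x' : K)‖ := by
            rw [norm_pos_iff, sub_ne_zero]
            exact fun hc => hxx (Subtype.coe_injective hc)
          exact ((rtend q hq).eventually (gt_mem_nhds hpos)).mono (fun l2 hlt _ => hlt)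
      exact hev.exists
    obtain ⟨l, hsep⟩ := hl
    have hrl : (0 : ℝ) < (q : ℝ) ^ (-(l : ℤ)) := zpow_pos hq0 _
    have hChoice : ∀ x ∈ F, ∃ z : RoI K,
        ‖(z : K) - (x : K)‖ ≤ (q : ℝ) ^ (-(l : ℤ)) ∧ 1 / ((n : ℝ) + 1) ≤ |f z - f x| := by
      intro x hx
      have hxZ : x ∈ Zn n := hFsub hx
      rw [hZn, Set.mem_setOf_eq] at hxZ
      obtain ⟨z, hz1, hz2⟩ := hxZ _ hrl
      refine ⟨z, ?_, hz2⟩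
      rw [Subtype.dist_eq, dist_eq_norm] at hz1
      exact hz1.le
    choose! y hy1 hy2 using hChoice
    have hyne : ∀ x ∈ F, 0 < ‖((y x : K)) - (x : K)‖ := by
      intro x hx
      rw [norm_pos_iff, sub_ne_zero]
      intro hc
      have hyx : y x = x := Subtype.coe_injective hc
      have h2 := hy2 x hx
      rw [hyx, sub_self, abs_zero] at h2
      have h3 : (0 : ℝ) < 1 / ((n : ℝ) + 1) := by positivity
      linarith
    have hLex : ∃ L : ℕ, (l ≤ L ∧ 1 ≤ L) ∧
        ∀ x ∈ F, (q : ℝ) ^ (-(L : ℤ)) < ‖((y x : K)) - (x : K)‖ := by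
      have h1 : ∀ᶠ L : ℕ in atTop, l ≤ L ∧ 1 ≤ L :=
        (Filter.eventually_ge_atTop l).and (Filter.eventually_ge_atTop 1)
      have h2 : ∀ᶠ L : ℕ in atTop, ∀ x ∈ F,
          (q : ℝ) ^ (-(L : ℤ)) < ‖((y x : K)) - (x : K)‖ := by
        rw [Filter.eventually_all_finset]
        intro x hx
        exact (rtend q hq).eventually (gt_mem_nhds (hyne x hx))
      exact (h1.and h2).exists
    obtain ⟨L, ⟨hlL, hL1⟩, hfar⟩ := hLex
    have hcore := core K q π hq hπ hb f F y l L hlL hsep hy1 hfar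
    have hVL : VBeerLevel K q π S f L ≤ VBeer K q π S f := by
      rw [VBeer]
      have h := le_iSup (fun lam => VBeerLevel K q π S f (lam + 1)) (L - 1)
      rwa [Nat.sub_add_cancel hL1] at h
    have hcard : ((N + 1 : ℕ) : ℝ≥0∞) * e ≤ VBeer K q π S f := by
      calc ((N + 1 : ℕ) : ℝ≥0∞) * e = ∑ _x ∈ F, e := by
            rw [Finset.sum_const, hFcard, nsmul_eq_mul]
        _ ≤ ∑ x ∈ F, ENNReal.ofReal |f (y x) - f x| :=
            Finset.sum_le_sum (fun x hx => ENNReal.ofReal_le_ofReal (hy2 x hx))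
        _ ≤ VBeerLevel K q π S f L := hcore
        _ ≤ VBeer K q π S f := hVL
    have hVe : VBeer K q π S f / e ≠ ⊤ := (ENNReal.div_lt_top hf.ne he0.ne').ne
    have hle : ((N + 1 : ℕ) : ℝ≥0∞) ≤ VBeer K q π S f / e :=
      (ENNReal.le_div_iff_mul_le (Or.inl he0.ne') (Or.inl ENNReal.ofReal_ne_top)).2 hcard
    have hreal : ((N + 1 : ℕ) : ℝ) ≤ (VBeer K q π S f / e).toReal := by
      have := ENNReal.toReal_mono hVe hle
      rwa [ENNReal.toReal_natCast] at this
    have hceil : (VBeer K q π S f / e).toReal ≤ (N : ℝ) := Nat.le_ceil _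
    push_cast at hreal
    linarith
  refine ⟨⋃ n, Zn n, Set.countable_iUnion (fun n => (hfin n).countable), ?_⟩
  intro x hx
  rw [Metric.continuousAt_iff]
  by_contra hc
  push_neg at hc
  obtain ⟨ε, hε, hδ⟩ := hc
  obtain ⟨n, hn⟩ := exists_nat_one_div_lt hε
  refine hx (Set.mem_iUnion.2 ⟨n, ?_⟩)
  rw [hZn]
  simp only [Set.mem_setOf_eq]
  intro δ hδ'
  obtain ⟨z, hz1, hz2⟩ := hδ δ hδ'
  refine ⟨z, hz1, ?_⟩
  rw [Real.dist_eq] at hz2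
  calc 1 / ((n : ℝ) + 1) ≤ ε := le_of_lt hn
    _ ≤ |f z - f x| := hz2


end NAKoksma
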